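/- arXiv:2005.05647 — 2 statements merged into one kernel-verified Lean document; each statement's English description precedes it below -/
import Mathlib

section
/- Let a be a real d×d matrix with symmetric part s = (a + aᵀ)/2 positive definite and skew-symmetric part t = (a - aᵀ)/2, and suppose |Im ⟨a ξ, ξ⟩| ≤ tan(θ₂) · Re ⟨a ξ, ξ⟩ for all ξ ∈ ℂ^d, where θ₂ ∈ [0, π/2). Then ‖s^{-1/2} t s^{-1/2}‖ ≤ tan θ₂, where the norm is the operator norm on ℝ^d. -/
open Matrix Complex

/-- Euclidean operator norm of a real `d×d` matrix. -/
noncomputable def opNorm {d : ℕ} (M : Matrix (Fin d) (Fin d) ℝ) : ℝ :=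
  ‖LinearMap.toContinuousLinearMap (Matrix.toEuclideanLin M)‖

/-- The Hermitian form `⟨a ξ, ξ⟩` of a real matrix `a`, acting ℂ-linearly on `ℂ^d`. -/
noncomputable def hermFormR (d : ℕ) (a : Matrix (Fin d) (Fin d) ℝ) (ξ : Fin d → ℂ) : ℂ :=
  ∑ i, (a.map Complex.ofReal).mulVec ξ i * (starRingEnd ℂ) (ξ i)

lemma herm_parts (d : ℕ) (a : Matrix (Fin d) (Fin d) ℝ) (x y : Fin d → ℝ) :
    hermFormR d a (fun i => ⟨x i, y i⟩) =
      ⟨(a.mulVec x) ⬝ᵥ x + (a.mulVec y) ⬝ᵥ y, (a.mulVec y) ⬝ᵥ x - (a.mulVec x) ⬝ᵥ y⟩ := by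
  have hmv : (a.map Complex.ofReal).mulVec (fun i => (⟨x i, y i⟩ : ℂ)) =
      fun i => (⟨a.mulVec x i, a.mulVec y i⟩ : ℂ) := by
    funext i
    simp only [Matrix.mulVec, dotProduct, Matrix.map_apply, Complex.ext_iff,
      Complex.re_sum, Complex.im_sum, Complex.mul_re, Complex.mul_im,
      Complex.ofReal_re, Complex.ofReal_im]
    constructor <;> exact Finset.sum_congr rfl fun j _ => by ring
  unfold hermFormR
  rw [hmv]
  simp only [Complex.ext_iff, Complex.re_sum, Complex.im_sum, dotProduct]
  constructor
  · rw [← Finset.sum_add_distrib]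
    apply Finset.sum_congr rfl
    intro i _
    simp [Complex.mul_re, Complex.conj_re, Complex.conj_im]
    try ring
  · rw [← Finset.sum_sub_distrib]
    apply Finset.sum_congr rfl
    intro i _
    simp [Complex.mul_im, Complex.conj_re, Complex.conj_im]
    try ring

lemma dp_aux {d : ℕ} (M N : Matrix (Fin d) (Fin d) ℝ) (x y : Fin d → ℝ) :
    (M.mulVec x) ⬝ᵥ (N.mulVec y) = ((Nᵀ * M).mulVec x) ⬝ᵥ y := by
  rw [Matrix.dotProduct_mulVec, ← Matrix.mulVec_transpose, Matrix.mulVec_mulVec]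

/-- if the real matrix `a`, with positive definite symmetric part
`s = (a + aᵀ)/2` and skew part `t = (a - aᵀ)/2`, is sectorial of angle `θ₂`, then
`‖s^{-1/2} t s^{-1/2}‖ ≤ tan θ₂`, where `r = s^{-1/2}` is the positive definite
square root of `s⁻¹`. -/
theorem stmt3 (d : ℕ) (a : Matrix (Fin d) (Fin d) ℝ) (θ₂ : ℝ)
    (hθ₂ : θ₂ ∈ Set.Ico 0 (Real.pi / 2))
    (s t : Matrix (Fin d) (Fin d) ℝ)
    (hs : s = (1 / 2 : ℝ) • (a + aᵀ)) (ht : t = (1 / 2 : ℝ) • (a - aᵀ))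
    (hspd : s.PosDef)
    (hsect : ∀ ξ : Fin d → ℂ,
      |(hermFormR d a ξ).im| ≤ Real.tan θ₂ * (hermFormR d a ξ).re)
    (r : Matrix (Fin d) (Fin d) ℝ) (hr : r.PosDef) (hrr : r * r = s⁻¹) :
    opNorm (r * t * r) ≤ Real.tan θ₂ := by
  obtain ⟨hθ0, hθlt⟩ := hθ₂
  have htan : 0 ≤ Real.tan θ₂ :=
    Real.tan_nonneg_of_nonneg_of_le_pi_div_two hθ0 hθlt.le
  have hsdet : IsUnit s.det := isUnit_iff_ne_zero.2 (ne_of_gt hspd.det_pos)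
  have hsinv : s * s⁻¹ = 1 := Matrix.mul_nonsing_inv s hsdet
  have hinvs : s⁻¹ * s = 1 := Matrix.nonsing_inv_mul s hsdet
  have hrT : rᵀ = r := by
    have := hr.isHermitian.eq
    rwa [Matrix.conjTranspose_eq_transpose_of_trivial] at this
  -- r commutes with s
  have hcomm : s * r = r * s := by
    have h1 : r * s⁻¹ = s⁻¹ * r := by rw [← hrr, mul_assoc]
    calc s * r = s * r * (s⁻¹ * s) := by rw [hinvs, mul_one]
      _ = s * (r * s⁻¹) * s := by rw [Matrix.mul_assoc, Matrix.mul_assoc, Matrix.mul_assoc]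
      _ = s * (s⁻¹ * r) * s := by rw [h1]
      _ = r * s := by rw [← Matrix.mul_assoc, hsinv, one_mul]
  have hrsr : r * s * r = 1 := by
    rw [← hcomm, mul_assoc, hrr, hsinv]
  -- key inequality
  set B := r * t * r with hB
  have key : ∀ u v : Fin d → ℝ,
      2 * |(B.mulVec u) ⬝ᵥ v| ≤ Real.tan θ₂ * (u ⬝ᵥ u + v ⬝ᵥ v) := by
    intro u v
    set x := r.mulVec u with hx
    set y := r.mulVec v with hy
    have hsect' := hsect (fun i => ⟨x i, y i⟩)
    rw [herm_parts] at hsect'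
    simp only at hsect'
    -- real part equals u⬝u + v⬝v
    have hsym : ∀ z : Fin d → ℝ, (a.mulVec z) ⬝ᵥ z = (s.mulVec z) ⬝ᵥ z := by
      intro z
      have hT : (aᵀ.mulVec z) ⬝ᵥ z = (a.mulVec z) ⬝ᵥ z := by
        rw [Matrix.mulVec_transpose, ← Matrix.dotProduct_mulVec, dotProduct_comm]
      rw [hs]
      simp [Matrix.add_mulVec, Matrix.smul_mulVec, add_dotProduct,
        smul_dotProduct, hT]
      ring
    have hrquad : ∀ w : Fin d → ℝ, (s.mulVec (r.mulVec w)) ⬝ᵥ (r.mulVec w) = w ⬝ᵥ w := by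
      intro w
      rw [Matrix.mulVec_mulVec, dp_aux, hrT, ← Matrix.mul_assoc, hrsr, Matrix.one_mulVec]
    have hre : (a.mulVec x) ⬝ᵥ x + (a.mulVec y) ⬝ᵥ y = u ⬝ᵥ u + v ⬝ᵥ v := by
      rw [hsym x, hsym y, hx, hy, hrquad u, hrquad v]
    -- imaginary part
    have him : (a.mulVec y) ⬝ᵥ x - (a.mulVec x) ⬝ᵥ y = -2 * ((B.mulVec u) ⬝ᵥ v) := by
      have e1 : (a.mulVec y) ⬝ᵥ x = ((r * a * r).mulVec v) ⬝ᵥ u := by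
        rw [hx, hy, Matrix.mulVec_mulVec, dp_aux, hrT, ← Matrix.mul_assoc]
      have e2 : (a.mulVec x) ⬝ᵥ y = ((r * a * r).mulVec u) ⬝ᵥ v := by
        rw [hx, hy, Matrix.mulVec_mulVec, dp_aux, hrT, ← Matrix.mul_assoc]
      have e3 : ((r * a * r).mulVec v) ⬝ᵥ u = ((r * aᵀ * r).mulVec u) ⬝ᵥ v := by
        rw [dotProduct_comm, Matrix.dotProduct_mulVec, ← Matrix.mulVec_transpose,
          Matrix.transpose_mul, Matrix.transpose_mul, hrT, Matrix.mul_assoc]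
      have e4 : r * aᵀ * r - r * a * r = (-2 : ℝ) • B := by
        rw [hB, ht]
        simp only [Matrix.mul_smul, Matrix.smul_mul, smul_smul]
        norm_num
        rw [Matrix.mul_sub, Matrix.sub_mul]
        abel
      rw [e1, e2, e3, ← sub_dotProduct, ← Matrix.sub_mulVec, e4]
      rw [Matrix.smul_mulVec, smul_dotProduct, smul_eq_mul]
      try ring
    rw [hre, him] at hsect'
    calc 2 * |(B.mulVec u) ⬝ᵥ v| = |(-2 : ℝ) * ((B.mulVec u) ⬝ᵥ v)| := by
          rw [abs_mul]; norm_num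
      _ ≤ Real.tan θ₂ * (u ⬝ᵥ u + v ⬝ᵥ v) := hsect'
  -- pointwise norm bound
  have hpt : ∀ u : Fin d → ℝ,
      Real.sqrt ((B.mulVec u) ⬝ᵥ (B.mulVec u)) ≤ Real.tan θ₂ * Real.sqrt (u ⬝ᵥ u) := by
    intro u
    set w := B.mulVec u with hw
    have hqnn : (0:ℝ) ≤ w ⬝ᵥ w := Finset.sum_nonneg fun i _ => mul_self_nonneg _
    have hpnn : (0:ℝ) ≤ u ⬝ᵥ u := Finset.sum_nonneg fun i _ => mul_self_nonneg _
    rcases eq_or_lt_of_le hqnn with hq0 | hqpos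
    · rw [← hq0, Real.sqrt_zero]
      positivity
    rcases eq_or_lt_of_le hpnn with hp0 | hppos
    · exfalso
      have : u = 0 := dotProduct_self_eq_zero.mp hp0.symm
      rw [this] at hw
      simp [Matrix.mulVec_zero] at hw
      rw [hw] at hqpos
      simp at hqpos
    set c : ℝ := Real.sqrt (u ⬝ᵥ u) / Real.sqrt (w ⬝ᵥ w) with hc
    have hsq : Real.sqrt (w ⬝ᵥ w) > 0 := Real.sqrt_pos.2 hqpos
    have hsp : Real.sqrt (u ⬝ᵥ u) > 0 := Real.sqrt_pos.2 hppos
    have hkey := key u (c • w)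
    have hdot1 : w ⬝ᵥ (c • w) = c * (w ⬝ᵥ w) := by
      simp [dotProduct_smul, smul_eq_mul]
    have hdot2 : (c • w) ⬝ᵥ (c • w) = c ^ 2 * (w ⬝ᵥ w) := by
      simp [smul_dotProduct, dotProduct_smul, smul_eq_mul]
      ring
    rw [hdot1, hdot2] at hkey
    have hcq : c * (w ⬝ᵥ w) = Real.sqrt (u ⬝ᵥ u) * Real.sqrt (w ⬝ᵥ w) := by
      rw [hc]
      field_simp
      rw [Real.sq_sqrt hqnn]
    have hcpos : 0 < c := div_pos hsp hsq
    have habs : |c * (w ⬝ᵥ w)| = c * (w ⬝ᵥ w) := abs_of_pos (mul_pos hcpos hqpos)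
    have hc2 : c ^ 2 * (w ⬝ᵥ w) = u ⬝ᵥ u := by
      rw [hc, div_pow, Real.sq_sqrt hqnn, Real.sq_sqrt hpnn]
      field_simp
    rw [habs, hcq, hc2] at hkey
    nlinarith [hsp, hsq, Real.mul_self_sqrt hpnn]
  -- conclude operator norm bound
  have dp_eq : ∀ z : Fin d → ℝ, z ⬝ᵥ z = ∑ i, z i ^ 2 := by
    intro z
    simp [dotProduct, pow_two]
  unfold opNorm
  apply ContinuousLinearMap.opNorm_le_bound _ htan
  intro ξ
  have hp := hpt (WithLp.ofLp ξ)
  rw [dp_eq, dp_eq] at hp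
  simp only [LinearMap.coe_toContinuousLinearMap', Matrix.toEuclideanLin_apply,
    EuclideanSpace.norm_eq, WithLp.equiv_apply, Real.norm_eq_abs, _root_.sq_abs]
  convert hp using 3
end

section
/- Let Λ ⊂ ℝ^d be a bounded N-regular set (an N-set), let Ξ ⊆ Λ, and let ρ > 0. Then there exists an N-regular set Ξ• with Ξ ⊆ Ξ• ⊆ Λ such that every point of Ξ• \ Ξ has distance at most ρ to Ξ. -/
open MeasureTheory Metric
open scoped MeasureTheory

/-- `E` is an `N`-set (Ahlfors `N`-regular): `c r^N ≤ H_N(E ∩ B_r(x)) ≤ c⁻¹ r^N`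
for all `x ∈ E` and `0 < r ≤ 1`. -/
def IsNSet {d : ℕ} (N : ℝ) (E : Set (EuclideanSpace ℝ (Fin d))) : Prop :=
  ∃ c > 0, ∀ x ∈ E, ∀ r : ℝ, 0 < r → r ≤ 1 →
    ENNReal.ofReal (c * r ^ N) ≤ μH[N] (E ∩ ball x r) ∧
      μH[N] (E ∩ ball x r) ≤ ENNReal.ofReal (c⁻¹ * r ^ N)

namespace Stmt13Aux

variable {d : ℕ}

/-- The scale at step `k`. -/
noncomputable def δ (ρ : ℝ) (k : ℕ) : ℝ := ρ / 2 / 2 ^ k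

lemma δ_pos {ρ : ℝ} (hρ : 0 < ρ) (k : ℕ) : 0 < δ ρ k := by
  have : (0:ℝ) < 2 ^ k := by positivity
  unfold δ; positivity

lemma δ_succ (ρ : ℝ) (k : ℕ) : δ ρ (k + 1) = δ ρ k / 2 := by
  unfold δ; rw [pow_succ]; ring

/-- The iterated thickening of `Ξ` inside `Λ`. -/
noncomputable def EE (Λ Ξ : Set (EuclideanSpace ℝ (Fin d))) (ρ : ℝ) : ℕ → Set (EuclideanSpace ℝ (Fin d))
  | 0 => Ξ
  | k + 1 => Λ ∩ {z | Metric.infDist z (EE Λ Ξ ρ k) ≤ δ ρ k}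

variable {Λ Ξ : Set (EuclideanSpace ℝ (Fin d))} {ρ : ℝ}

lemma EE_subset (hΞ : Ξ ⊆ Λ) : ∀ k, EE Λ Ξ ρ k ⊆ Λ
  | 0 => hΞ
  | k + 1 => Set.inter_subset_left

lemma EE_mono (hΞ : Ξ ⊆ Λ) (hρ : 0 < ρ) (k : ℕ) : EE Λ Ξ ρ k ⊆ EE Λ Ξ ρ (k + 1) := by
  intro z hz
  exact ⟨EE_subset hΞ k hz, by
    simpa [Metric.infDist_zero_of_mem hz] using (δ_pos hρ k).le⟩

lemma EE_mono' (hΞ : Ξ ⊆ Λ) (hρ : 0 < ρ) {j k : ℕ} (h : j ≤ k) :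
    EE Λ Ξ ρ j ⊆ EE Λ Ξ ρ k := by
  induction k with
  | zero => simpa [Nat.le_zero.mp h]
  | succ n ih =>
      rcases Nat.lt_or_ge j (n+1) with h' | h'
      · exact (ih (Nat.lt_succ_iff.mp h')).trans (EE_mono hΞ hρ n)
      · have : j = n + 1 := le_antisymm h h'
        simp [this]

lemma EE_nonempty (hΞ : Ξ ⊆ Λ) (hρ : 0 < ρ) (hne : Ξ.Nonempty) (k : ℕ) :
    (EE Λ Ξ ρ k).Nonempty :=
  hne.mono (EE_mono' hΞ hρ (Nat.zero_le k))

/-- One-step distance estimate. -/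
lemma infDist_step (hΞ : Ξ ⊆ Λ) (hρ : 0 < ρ) (hne : Ξ.Nonempty) (j : ℕ)
    (x : EuclideanSpace ℝ (Fin d)) :
    Metric.infDist x (EE Λ Ξ ρ j) ≤ Metric.infDist x (EE Λ Ξ ρ (j + 1)) + δ ρ j := by
  refine le_of_forall_sub_le fun ε hε => ?_
  have hne' := EE_nonempty hΞ hρ hne (j + 1)
  have h1 : Metric.infDist x (EE Λ Ξ ρ (j+1)) < Metric.infDist x (EE Λ Ξ ρ (j+1)) + ε := by
    linarith
  obtain ⟨y, hy, hxy⟩ := (Metric.infDist_lt_iff hne').mp h1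
  have h2 : Metric.infDist x (EE Λ Ξ ρ j) ≤ Metric.infDist y (EE Λ Ξ ρ j) + dist x y :=
    Metric.infDist_le_infDist_add_dist
  have h3 : Metric.infDist y (EE Λ Ξ ρ j) ≤ δ ρ j := hy.2
  linarith

/-- Telescoped distance estimate. -/
lemma infDist_chain (hΞ : Ξ ⊆ Λ) (hρ : 0 < ρ) (hne : Ξ.Nonempty) (j m : ℕ)
    (x : EuclideanSpace ℝ (Fin d)) :
    Metric.infDist x (EE Λ Ξ ρ j) ≤
      Metric.infDist x (EE Λ Ξ ρ (j + m)) + 2 * δ ρ j - 2 * δ ρ (j + m) := by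
  induction m with
  | zero => simp
  | succ n ih =>
      have h1 := infDist_step hΞ hρ hne (j + n) x
      have h2 : δ ρ ((j + n) + 1) = δ ρ (j + n) / 2 := δ_succ ρ (j + n)
      show Metric.infDist x (EE Λ Ξ ρ j) ≤
        Metric.infDist x (EE Λ Ξ ρ ((j + n) + 1)) + 2 * δ ρ j - 2 * δ ρ ((j + n) + 1)
      linarith

lemma infDist_EE (hΞ : Ξ ⊆ Λ) (hρ : 0 < ρ) (hne : Ξ.Nonempty) {j k : ℕ}
    {x : EuclideanSpace ℝ (Fin d)} (hx : x ∈ EE Λ Ξ ρ k) :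
    Metric.infDist x (EE Λ Ξ ρ j) ≤ 2 * δ ρ j := by
  rcases le_or_gt k j with h | h
  · have : x ∈ EE Λ Ξ ρ j := EE_mono' hΞ hρ h hx
    simpa [Metric.infDist_zero_of_mem this] using (by have := δ_pos hρ j; linarith : (0:ℝ) ≤ 2 * δ ρ j)
  · obtain ⟨m, rfl⟩ : ∃ m, k = j + m := ⟨k - j, by omega⟩
    have := infDist_chain hΞ hρ hne j m x
    rw [Metric.infDist_zero_of_mem hx] at this
    have := δ_pos hρ (j + m)
    linarith

lemma ball_subset_EE (hΞ : Ξ ⊆ Λ) {j : ℕ} {y : EuclideanSpace ℝ (Fin d)}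
    (hy : y ∈ EE Λ Ξ ρ j) {s : ℝ} (hs : s ≤ δ ρ j) :
    Λ ∩ ball y s ⊆ EE Λ Ξ ρ (j + 1) := by
  intro z hz
  refine ⟨hz.1, ?_⟩
  have : Metric.infDist z (EE Λ Ξ ρ j) ≤ dist z y := Metric.infDist_le_dist_of_mem hy
  have hd : dist z y < s := mem_ball.mp hz.2
  exact le_trans this (le_trans hd.le hs)

end Stmt13Aux

open Stmt13Aux in
/-- a subset `Ξ` of a bounded `N`-regular set `Λ` can be enlarged,
within `Λ` and by at most distance `ρ`, to an `N`-regular set `Ξ•`. -/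
theorem stmt13 {d : ℕ} (N : ℝ) (Λ Ξ : Set (EuclideanSpace ℝ (Fin d)))
    (hΛb : Bornology.IsBounded Λ) (hΛ : IsNSet N Λ) (hΞ : Ξ ⊆ Λ)
    (ρ : ℝ) (hρ : 0 < ρ) :
    ∃ Ξ' : Set (EuclideanSpace ℝ (Fin d)), IsNSet N Ξ' ∧ Ξ ⊆ Ξ' ∧ Ξ' ⊆ Λ ∧
      ∀ x ∈ Ξ' \ Ξ, Metric.infDist x Ξ ≤ ρ := by
  classical
  obtain ⟨c, hc, hreg⟩ := hΛ
  rcases Set.eq_empty_or_nonempty Ξ with rfl | hne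
  · refine ⟨∅, ⟨1, one_pos, fun x hx => absurd hx (Set.notMem_empty x)⟩, by simp, by simp, by simp⟩
  -- `Ξ` nonempty; first rule out `N < 0`.
  rcases lt_or_ge N 0 with hN | hN
  · exfalso
    obtain ⟨x₀, hx₀⟩ := hne
    have hx₀Λ := hΞ hx₀
    obtain ⟨M, hM⟩ : ∃ M : ℝ, M = c⁻¹ * c⁻¹ + 1 := ⟨_, rfl⟩
    have hM1 : (1:ℝ) ≤ M := by
      have h0 : (0:ℝ) ≤ c⁻¹ * c⁻¹ := by positivity
      rw [hM]; linarith
    have hMpos : (0:ℝ) < M := lt_of_lt_of_le one_pos hM1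
    obtain ⟨r, hr⟩ : ∃ r : ℝ, r = M ^ (1 / N) := ⟨_, rfl⟩
    have hrpos : 0 < r := by rw [hr]; exact Real.rpow_pos_of_pos hMpos _
    have hr1 : r ≤ 1 := by
      rw [hr]
      refine Real.rpow_le_one_of_one_le_of_nonpos hM1 (by
        have : 1 / N < 0 := div_neg_of_pos_of_neg one_pos hN
        linarith)
    have hNne : N ≠ 0 := ne_of_lt hN
    have hrN : r ^ N = M := by
      rw [hr, ← Real.rpow_mul hMpos.le, one_div, inv_mul_cancel₀ hNne, Real.rpow_one]
    have hlow := (hreg x₀ hx₀Λ r hrpos hr1).1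
    have hupp := (hreg x₀ hx₀Λ 1 one_pos le_rfl).2
    have hmono : μH[N] (Λ ∩ ball x₀ r) ≤ μH[N] (Λ ∩ ball x₀ 1) :=
      measure_mono (Set.inter_subset_inter_right _ (ball_subset_ball hr1))
    have hchain : ENNReal.ofReal (c * r ^ N) ≤ ENNReal.ofReal (c⁻¹ * (1:ℝ) ^ N) :=
      le_trans hlow (le_trans hmono hupp)
    have h1N : ((1:ℝ) ^ N) = 1 := Real.one_rpow N
    have hfin : c * M ≤ c⁻¹ := by
      have := (ENNReal.ofReal_le_ofReal_iff (by positivity)).mp hchain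
      rw [h1N, mul_one] at this
      rw [← hrN]; exact this
    have hMle : M ≤ c⁻¹ * c⁻¹ := by
      calc M = c⁻¹ * (c * M) := by field_simp
      _ ≤ c⁻¹ * c⁻¹ := mul_le_mul_of_nonneg_left hfin (by positivity)
    rw [hM] at hMle
    linarith
  -- Main case: `N ≥ 0`, `Ξ` nonempty.
  set Ξ' : Set (EuclideanSpace ℝ (Fin d)) := ⋃ k, EE Λ Ξ ρ k with hΞ'
  have hsub : Ξ' ⊆ Λ := Set.iUnion_subset fun k => EE_subset hΞ k
  have hΞsub : Ξ ⊆ Ξ' := Set.subset_iUnion (fun k => EE Λ Ξ ρ k) 0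
  set κ : ℝ := min (ρ / 2) (1 / 16) with hκ
  have hκpos : 0 < κ := lt_min (by linarith) (by norm_num)
  have hκ1 : κ ≤ 1 := le_trans (min_le_right _ _) (by norm_num)
  refine ⟨Ξ', ⟨min c (c * κ ^ N), lt_min hc (by positivity), fun x hx r hrpos hr1 => ?_⟩,
    hΞsub, hsub, fun x hx => ?_⟩
  · constructor
    · -- lower bound
      obtain ⟨k, hk⟩ := Set.mem_iUnion.mp hx
      -- choose scale index j
      have hexists : ∃ j : ℕ, δ ρ j ≤ r / 8 := by
        obtain ⟨n, hn⟩ := exists_pow_lt_of_lt_one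
          (show (0:ℝ) < (r/8) / (ρ/2) by positivity) (show (1:ℝ)/2 < 1 by norm_num)
        refine ⟨n, ?_⟩
        have h2 : δ ρ n = (ρ/2) * (1/2)^n := by
          unfold δ; rw [div_pow]; ring_nf
        rw [h2]
        have := mul_lt_mul_of_pos_left hn (show (0:ℝ) < ρ/2 by linarith)
        calc (ρ/2) * (1/2)^n ≤ (ρ/2) * ((r/8) / (ρ/2)) := by nlinarith [pow_pos (show (0:ℝ) < 1/2 by norm_num) n]
        _ = r / 8 := by field_simp
      set j := Nat.find hexists with hj
      have hδj : δ ρ j ≤ r / 8 := Nat.find_spec hexists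
      have hδjpos := δ_pos hρ j
      -- lower bound on δ ρ j
      have hκr : κ * r ≤ δ ρ j := by
        rcases Nat.eq_zero_or_pos j with h0 | h0
        · -- j = 0 : δ ρ 0 = ρ/2, and κ * r ≤ (ρ/2) * 1
          have : δ ρ 0 = ρ / 2 := by unfold δ; simp
          rw [h0, this]
          have h1 : κ ≤ ρ / 2 := min_le_left _ _
          nlinarith
        · have hlt : ¬ δ ρ (j - 1) ≤ r / 8 := Nat.find_min hexists (by omega)
          push_neg at hlt
          have hsucc : δ ρ j = δ ρ (j - 1) / 2 := by
            have hjj : j = (j - 1) + 1 := by omega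
            conv_lhs => rw [hjj]
            exact δ_succ ρ (j - 1)
          have : r / 16 < δ ρ j := by rw [hsucc]; linarith
          have h1 : κ ≤ 1 / 16 := min_le_right _ _
          nlinarith
      -- find a point y ∈ EE j close to x
      have hxd : Metric.infDist x (EE Λ Ξ ρ j) ≤ 2 * δ ρ j := infDist_EE hΞ hρ hne hk
      have hlt : Metric.infDist x (EE Λ Ξ ρ j) < r / 3 := lt_of_le_of_lt hxd (by linarith)
      obtain ⟨y, hy, hxy⟩ := (Metric.infDist_lt_iff (EE_nonempty hΞ hρ hne j)).mp hlt
      have hyΛ : y ∈ Λ := EE_subset hΞ j hy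
      set s : ℝ := δ ρ j with hs
      have hs1 : s ≤ 1 := by linarith
      -- ball y s ⊆ ball x r
      have hball : ball y s ⊆ ball x r := by
        intro z hz
        rw [mem_ball] at hz ⊢
        have := dist_triangle z y x
        have hyx : dist y x = dist x y := dist_comm y x
        linarith
      have hincl : Λ ∩ ball y s ⊆ Ξ' ∩ ball x r := by
        intro z hz
        exact ⟨Set.mem_iUnion.mpr ⟨j + 1, ball_subset_EE hΞ hy le_rfl hz⟩, hball hz.2⟩
      have hμ : ENNReal.ofReal (c * s ^ N) ≤ μH[N] (Ξ' ∩ ball x r) :=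
        le_trans ((hreg y hyΛ s hδjpos hs1).1) (measure_mono hincl)
      refine le_trans ?_ hμ
      apply ENNReal.ofReal_le_ofReal
      have h1 : (κ * r) ^ N ≤ s ^ N := Real.rpow_le_rpow (by positivity) hκr hN
      have h2 : (κ * r) ^ N = κ ^ N * r ^ N := Real.mul_rpow hκpos.le hrpos.le
      have h3 : min c (c * κ ^ N) * r ^ N ≤ c * κ ^ N * r ^ N :=
        mul_le_mul_of_nonneg_right (min_le_right _ _) (Real.rpow_nonneg hrpos.le N)
      calc min c (c * κ ^ N) * r ^ N ≤ c * κ ^ N * r ^ N := h3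
      _ = c * (κ * r) ^ N := by rw [h2]; ring
      _ ≤ c * s ^ N := mul_le_mul_of_nonneg_left h1 hc.le
    · -- upper bound
      have hxΛ : x ∈ Λ := hsub hx
      have h1 : μH[N] (Ξ' ∩ ball x r) ≤ μH[N] (Λ ∩ ball x r) :=
        measure_mono (Set.inter_subset_inter_left _ hsub)
      refine le_trans (le_trans h1 ((hreg x hxΛ r hrpos hr1).2)) (ENNReal.ofReal_le_ofReal ?_)
      have hcc : min c (c * κ ^ N) ≤ c := min_le_left _ _
      have hcp : 0 < min c (c * κ ^ N) := lt_min hc (by positivity)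
      have : c⁻¹ ≤ (min c (c * κ ^ N))⁻¹ := by
        exact inv_anti₀ hcp hcc
      exact mul_le_mul_of_nonneg_right this (Real.rpow_nonneg hrpos.le N)
  · -- distance bound
    obtain ⟨k, hk⟩ := Set.mem_iUnion.mp hx.1
    have := infDist_EE hΞ hρ hne (j := 0) hk
    have hδ0 : δ ρ 0 = ρ / 2 := by unfold δ; simp
    rw [hδ0] at this
    simpa [EE] using le_trans this (by linarith)
end
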